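/- The characteristic polynomial of the fundamental matrix M(p) of a 3PGQ p is (t² − 2a₀t + a₀² + λ₁λ₂a₁² + λ₁λ₃a₂² + λ₂λ₃a₃²)². -/

import Mathlib

open Polynomial

def fundM (l1 l2 l3 : ℝ) (p : ℝ × ℝ × ℝ × ℝ) : Matrix (Fin 4) (Fin 4) ℝ :=
  !![p.1, -l1*l2*p.2.1, -l1*l3*p.2.2.1, -l2*l3*p.2.2.2;
     p.2.1, p.1, -l3*p.2.2.2, l3*p.2.2.1;
     p.2.2.1, l2*p.2.2.2, p.1, -l2*p.2.1;
     p.2.2.2, -l1*p.2.2.1, l1*p.2.1, p.1]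

set_option maxHeartbeats 1600000 in
theorem fundM_charpoly (l1 l2 l3 : ℝ) (p : ℝ × ℝ × ℝ × ℝ) :
    (fundM l1 l2 l3 p).charpoly =
      (X^2 - C (2*p.1) * X +
        C (p.1^2 + l1*l2*p.2.1^2 + l1*l3*p.2.2.1^2 + l2*l3*p.2.2.2^2))^2 := by
  have h : (fundM l1 l2 l3 p).charmatrix =
      !![X - C p.1, C (l1*l2*p.2.1), C (l1*l3*p.2.2.1), C (l2*l3*p.2.2.2);
         -C p.2.1, X - C p.1, C (l3*p.2.2.2), -C (l3*p.2.2.1);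
         -C p.2.2.1, -C (l2*p.2.2.2), X - C p.1, C (l2*p.2.1);
         -C p.2.2.2, C (l1*p.2.2.1), -C (l1*p.2.1), X - C p.1] := by
    ext i j
    fin_cases i <;> fin_cases j <;>
      simp [Matrix.charmatrix_apply, fundM, Matrix.one_apply]
  rw [Matrix.charpoly, h]
  simp [Matrix.det_succ_row_zero, Fin.sum_univ_succ, Fin.succAbove, Fin.castSucc, Fin.castAdd, Fin.castLE]
  have h2 : (C (2:ℝ) : ℝ[X]) = 2 := map_ofNat C 2
  rw [h2]
  ring
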